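/- The only integer tuples (a, b_1, ..., b_k) with a ≥ 0, b_1 ≥ ... ≥ b_k ≥ 0, a^2 = Σ b_i^2 - 3, and b_1^2 + b_2^2 + b_3^2 - 3 ≤ a^2 ≤ (3/4)(b_1^2 + b_2^2 + b_3^2) are (listing nonzero entries): (0,1,1,1), (1,1,1,1,1), (1,2), (2,2,1,1,1), (3,2,2,2). -/

import Mathlib

/-- Enumeration of integer tuples (a, b₁ ≥ ... ≥ b_k ≥ 0), a ≥ 0, with
a² = Σ b_i² - 3 and b₁² + b₂² + b₃² - 3 ≤ a² ≤ (3/4)(b₁² + b₂² + b₃²). -/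
theorem stmt7 (k : ℕ) (hk : 3 ≤ k) (a : ℤ) (b : Fin k → ℤ) (ha : 0 ≤ a)
    (hmono : ∀ i j : Fin k, i ≤ j → b j ≤ b i)
    (hnonneg : ∀ i, 0 ≤ b i)
    (hsq : a ^ 2 = (∑ i, (b i) ^ 2) - 3)
    (hlow : (b ⟨0, by omega⟩) ^ 2 + (b ⟨1, by omega⟩) ^ 2 + (b ⟨2, by omega⟩) ^ 2 - 3 ≤ a ^ 2)
    (hup : 4 * a ^ 2 ≤ 3 * ((b ⟨0, by omega⟩) ^ 2 + (b ⟨1, by omega⟩) ^ 2 + (b ⟨2, by omega⟩) ^ 2)) :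
    ∃ p : ℤ × List ℤ,
      p ∈ [((0 : ℤ), [(1 : ℤ), 1, 1]), (1, [1, 1, 1, 1]), (1, [2]),
           (2, [2, 1, 1, 1]), (3, [2, 2, 2])] ∧
      a = p.1 ∧ ∀ i : Fin k, b i = p.2.getD i.val 0 := by
  have h0 : 0 < k := by omega
  have h1 : 1 < k := by omega
  have h2 : 2 < k := by omega
  set i0 : Fin k := ⟨0, h0⟩ with hi0
  set i1 : Fin k := ⟨1, h1⟩ with hi1
  set i2 : Fin k := ⟨2, h2⟩ with hi2
  obtain ⟨T, hT⟩ : ∃ t, t = ∑ i ∈ Finset.univ.filter (fun i : Fin k => 3 ≤ i.val), b i ^2 :=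
    ⟨_, rfl⟩
  have hsplit : ∑ i, b i ^2 = (b i0 ^2 + b i1 ^2 + b i2 ^2) + T := by
    have h := Finset.sum_filter_add_sum_filter_not Finset.univ (fun i : Fin k => 3 ≤ i.val)
      (fun i => b i ^2)
    have hcompl : Finset.univ.filter (fun i : Fin k => ¬ 3 ≤ i.val) = {i0, i1, i2} := by
      ext x
      simp [hi0, hi1, hi2, Fin.ext_iff]
      omega
    rw [hcompl] at h
    have h3 : ∑ x ∈ ({i0, i1, i2} : Finset (Fin k)), b x ^2
        = b i0 ^2 + b i1 ^2 + b i2 ^2 := by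
      rw [Finset.sum_insert (by simp [hi0, hi1, hi2, Fin.ext_iff]),
        Finset.sum_insert (by simp [hi1, hi2, Fin.ext_iff]), Finset.sum_singleton]
      ring
    rw [h3, ← hT] at h
    linarith
  have hTnn : 0 ≤ T := hT ▸ Finset.sum_nonneg (fun i _ => sq_nonneg _)
  have hE : a ^ 2 = b i0 ^2 + b i1 ^2 + b i2 ^2 + T - 3 := by rw [hsq, hsplit]
  have hup' : 4 * T + (b i0 ^2 + b i1 ^2 + b i2 ^2) ≤ 12 := by
    have := hup
    linarith [hE]
  -- claim A
  have claimA : T = 0 → ∀ i : Fin k, 3 ≤ i.val → b i = 0 := by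
    intro hT0 i hi
    rw [hT0] at hT
    have h := (Finset.sum_eq_zero_iff_of_nonneg (fun j _ => sq_nonneg (b j))).mp hT.symm i
      (Finset.mem_filter.mpr ⟨Finset.mem_univ _, hi⟩)
    exact pow_eq_zero_iff (by norm_num) |>.mp h
  -- claim B
  have claimB : b i2 = 1 → T = 1 → ∀ i : Fin k, 3 ≤ i.val →
      (i.val = 3 → b i = 1) ∧ (4 ≤ i.val → b i = 0) := by
    intro hb2 hT1
    have hble : ∀ i : Fin k, 3 ≤ i.val → b i ≤ 1 := by
      intro i hi
      have := hmono i2 i (by simp [Fin.le_def, hi2]; omega)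
      omega
    have hex : ∃ j ∈ Finset.univ.filter (fun i : Fin k => 3 ≤ i.val), b j ≠ 0 := by
      by_contra h
      push_neg at h
      have : T = 0 := by
        rw [hT]
        exact Finset.sum_eq_zero (fun i hi => by rw [h i hi]; ring)
      omega
    obtain ⟨j, hjs, hjne⟩ := hex
    have hj3 : 3 ≤ j.val := (Finset.mem_filter.mp hjs).2
    have hj1 : b j = 1 := by
      have := hnonneg j
      have := hble j hj3
      omega
    have hk4 : 3 < k := lt_of_le_of_lt hj3 j.isLt
    have h3 : b ⟨3, hk4⟩ = 1 := by
      have h1' := hmono ⟨3, hk4⟩ j (by simp [Fin.le_def]; omega)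
      have := hble ⟨3, hk4⟩ (by simp)
      omega
    intro i hi
    constructor
    · intro hi3
      rw [show i = ⟨3, hk4⟩ from Fin.ext hi3]
      exact h3
    · intro hi4
      by_contra hne
      have hb1 : b i = 1 := by
        have := hnonneg i
        have := hble i hi
        omega
      have hpair : b ⟨3, hk4⟩ ^2 + b i ^2 ≤ T := by
        have hne' : (⟨3, hk4⟩ : Fin k) ≠ i := by simp [Fin.ext_iff]; omega
        have hsub : ({⟨3, hk4⟩, i} : Finset (Fin k)) ⊆
            Finset.univ.filter (fun x : Fin k => 3 ≤ x.val) := by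
          intro x hx
          simp only [Finset.mem_insert, Finset.mem_singleton] at hx
          rcases hx with rfl | rfl <;> simp <;> omega
        calc b ⟨3, hk4⟩ ^2 + b i ^2 = ∑ x ∈ ({⟨3, hk4⟩, i} : Finset (Fin k)), b x ^2 := by
              rw [Finset.sum_pair hne']
          _ ≤ T := hT ▸ Finset.sum_le_sum_of_subset_of_nonneg hsub (fun _ _ _ => sq_nonneg _)
      rw [h3, hb1] at hpair
      norm_num at hpair
      omega
  have hTz : b i2 = 0 → T = 0 := by
    intro hz
    rw [hT]
    apply Finset.sum_eq_zero
    intro i hi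
    have hi3 := (Finset.mem_filter.mp hi).2
    have h1' := hmono i2 i (by simp [Fin.le_def, hi2]; omega)
    have h2' := hnonneg i
    have hbz : b i = 0 := by omega
    rw [hbz]; ring
  -- bounds
  have hb10 : b i1 ≤ b i0 := hmono i0 i1 (by simp [Fin.le_def, hi0, hi1])
  have hb21 : b i2 ≤ b i1 := hmono i1 i2 (by simp [Fin.le_def, hi1, hi2])
  have hb2nn : 0 ≤ b i2 := hnonneg i2
  have hb1nn : 0 ≤ b i1 := hnonneg i1
  have hb0nn : 0 ≤ b i0 := hnonneg i0
  have hb03 : b i0 ≤ 3 := by nlinarith [sq_nonneg (b i1), sq_nonneg (b i2)]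
  have ha3 : a ≤ 3 := by nlinarith [sq_nonneg (b i0), sq_nonneg (b i1), sq_nonneg (b i2)]
  obtain ⟨B0, hB0⟩ : ∃ x, x = b i0 := ⟨_, rfl⟩
  obtain ⟨B1, hB1⟩ : ∃ x, x = b i1 := ⟨_, rfl⟩
  obtain ⟨B2, hB2⟩ : ∃ x, x = b i2 := ⟨_, rfl⟩
  simp only [← hB0, ← hB1, ← hB2] at hE hup' hb10 hb21 hb2nn hb1nn hb0nn hb03 hTz
  have key : (B0 = 1 ∧ B1 = 1 ∧ B2 = 1 ∧ a = 0 ∧ T = 0) ∨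
      (B0 = 1 ∧ B1 = 1 ∧ B2 = 1 ∧ a = 1 ∧ T = 1) ∨
      (B0 = 2 ∧ B1 = 0 ∧ B2 = 0 ∧ a = 1 ∧ T = 0) ∨
      (B0 = 2 ∧ B1 = 1 ∧ B2 = 1 ∧ a = 2 ∧ T = 1) ∨
      (B0 = 2 ∧ B1 = 2 ∧ B2 = 2 ∧ a = 3 ∧ T = 0) := by
    interval_cases B0 <;> interval_cases B1 <;> interval_cases B2 <;> interval_cases a <;>
      norm_num at hE hup' hTz ⊢ <;> omega
  have hval : ∀ x : ℤ, B0 = x → b i0 = x := fun x hx => by rw [← hB0]; exact hx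
  have hval1 : ∀ x : ℤ, B1 = x → b i1 = x := fun x hx => by rw [← hB1]; exact hx
  have hval2 : ∀ x : ℤ, B2 = x → b i2 = x := fun x hx => by rw [← hB2]; exact hx
  rcases key with ⟨e0,e1,e2,ea,eT⟩|⟨e0,e1,e2,ea,eT⟩|⟨e0,e1,e2,ea,eT⟩|⟨e0,e1,e2,ea,eT⟩|⟨e0,e1,e2,ea,eT⟩
  · refine ⟨(0, [1,1,1]), by norm_num, ea, ?_⟩
    intro i
    rcases (show i.val = 0 ∨ i.val = 1 ∨ i.val = 2 ∨ 3 ≤ i.val from by omega) with h|h|h|h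
    · rw [show i = i0 from Fin.ext h, hval 1 e0]; rfl
    · rw [show i = i1 from Fin.ext h, hval1 1 e1]; rfl
    · rw [show i = i2 from Fin.ext h, hval2 1 e2]; rfl
    · rw [claimA eT i h, List.getD_eq_default _ _ (by simp; omega)]
  · refine ⟨(1, [1,1,1,1]), by norm_num, ea, ?_⟩
    intro i
    rcases (show i.val = 0 ∨ i.val = 1 ∨ i.val = 2 ∨ i.val = 3 ∨ 4 ≤ i.val from by omega)
      with h|h|h|h|h
    · rw [show i = i0 from Fin.ext h, hval 1 e0]; rfl
    · rw [show i = i1 from Fin.ext h, hval1 1 e1]; rfl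
    · rw [show i = i2 from Fin.ext h, hval2 1 e2]; rfl
    · rw [(claimB (hval2 1 e2) eT i (by omega)).1 h, h]; rfl
    · rw [(claimB (hval2 1 e2) eT i (by omega)).2 h,
        List.getD_eq_default _ _ (by simp; omega)]
  · refine ⟨(1, [2]), by norm_num, ea, ?_⟩
    intro i
    rcases (show i.val = 0 ∨ i.val = 1 ∨ i.val = 2 ∨ 3 ≤ i.val from by omega) with h|h|h|h
    · rw [show i = i0 from Fin.ext h, hval 2 e0]; rfl
    · rw [show i = i1 from Fin.ext h, hval1 0 e1, List.getD_eq_default _ _ (by simp [hi1])]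
    · rw [show i = i2 from Fin.ext h, hval2 0 e2, List.getD_eq_default _ _ (by simp [hi2])]
    · rw [claimA eT i h, List.getD_eq_default _ _ (by simp; omega)]
  · refine ⟨(2, [2,1,1,1]), by norm_num, ea, ?_⟩
    intro i
    rcases (show i.val = 0 ∨ i.val = 1 ∨ i.val = 2 ∨ i.val = 3 ∨ 4 ≤ i.val from by omega)
      with h|h|h|h|h
    · rw [show i = i0 from Fin.ext h, hval 2 e0]; rfl
    · rw [show i = i1 from Fin.ext h, hval1 1 e1]; rfl
    · rw [show i = i2 from Fin.ext h, hval2 1 e2]; rfl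
    · rw [(claimB (hval2 1 e2) eT i (by omega)).1 h, h]; rfl
    · rw [(claimB (hval2 1 e2) eT i (by omega)).2 h,
        List.getD_eq_default _ _ (by simp; omega)]
  · refine ⟨(3, [2,2,2]), by norm_num, ea, ?_⟩
    intro i
    rcases (show i.val = 0 ∨ i.val = 1 ∨ i.val = 2 ∨ 3 ≤ i.val from by omega) with h|h|h|h
    · rw [show i = i0 from Fin.ext h, hval 2 e0]; rfl
    · rw [show i = i1 from Fin.ext h, hval1 2 e1]; rfl
    · rw [show i = i2 from Fin.ext h, hval2 2 e2]; rfl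
    · rw [claimA eT i h, List.getD_eq_default _ _ (by simp; omega)]
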